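/- arXiv:2504.00215 — 2 statements merged into one kernel-verified Lean document; each statement's English description precedes it below -/
import Mathlib

section
/- Let V be a ℚ-vector space with basis {e_n}_{n ∈ ℤ} indexed by the integers, and for each n ∈ ℤ set f_n = e_n − 2 e_{n+1} + e_{n+2}. Then the family {f_n}_{n ∈ ℤ} is linearly independent and its span is a vector-space complement to the span of {e₀, e₁} in V. -/
theorem fn_linearIndependent_and_complement (V : Type*) [AddCommGroup V] [Module ℚ V]
    (e : Module.Basis ℤ ℚ V) (f : ℤ → V)
    (hf : ∀ n : ℤ, f n = e n - (2 : ℚ) • e (n + 1) + e (n + 2)) :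
    LinearIndependent ℚ f ∧
      IsCompl (Submodule.span ℚ (Set.range f)) (Submodule.span ℚ {e 0, e 1}) := by
  classical
  -- dual functionals φ m with φ m (f n) = δ_{n m}
  set φ : ℤ → V →ₗ[ℚ] ℚ :=
    fun m => e.constr ℚ (fun j => if m + 2 ≤ j then ((j - m - 1 : ℤ) : ℚ) else 0) with hφ
  have key : ∀ m n : ℤ, φ m (f n) = if n = m then 1 else 0 := by
    intro m n
    rw [hf]
    simp only [hφ, map_add, map_sub, map_smul, Module.Basis.constr_basis, smul_eq_mul]
    rcases lt_trichotomy n m with h | h | h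
    · rw [if_neg (by omega), if_neg (by omega), if_neg (by omega), if_neg (by omega : ¬ n = m)]
      ring
    · subst h
      rw [if_neg (by omega), if_neg (by omega), if_pos (by omega), if_pos rfl]
      push_cast
      ring
    · rw [if_neg (by omega : ¬ n = m)]
      rcases eq_or_lt_of_le (Int.add_one_le_of_lt h) with h1 | h1
      · rw [if_neg (by omega), if_pos (by omega), if_pos (by omega)]
        subst h1
        push_cast
        ring
      · rw [if_pos (by omega), if_pos (by omega), if_pos (by omega)]
        push_cast
        ring
  -- linear independence
  have hli : LinearIndependent ℚ f := by
    rw [linearIndependent_iff]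
    intro l hl
    ext m
    have := congrArg (φ m) hl
    rw [Finsupp.linearCombination_apply, map_finsuppSum, map_zero] at this
    simp only [map_smul, key, smul_eq_mul, mul_ite, mul_one, mul_zero] at this
    rw [Finsupp.sum_ite_eq' l m (fun _ a => a)] at this
    by_cases hm : m ∈ l.support
    · rw [if_pos hm] at this; simpa using this
    · simp only [Finsupp.notMem_support_iff] at hm; simp [hm]
  refine ⟨hli, ?_, ?_⟩
  · -- disjointness via functionals S (sum) and M (weighted sum)
    set S : V →ₗ[ℚ] ℚ := e.constr ℚ (fun _ => (1 : ℚ)) with hS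
    set M : V →ₗ[ℚ] ℚ := e.constr ℚ (fun j => (j : ℚ)) with hM
    have hSf : ∀ n, S (f n) = 0 := by
      intro n
      rw [hf]
      simp only [hS, map_add, map_sub, map_smul, Module.Basis.constr_basis, smul_eq_mul]
      ring
    have hMf : ∀ n, M (f n) = 0 := by
      intro n
      rw [hf]
      simp only [hM, map_add, map_sub, map_smul, Module.Basis.constr_basis, smul_eq_mul]
      push_cast
      ring
    rw [Submodule.disjoint_def]
    intro x hx1 hx2
    have hSx : S x = 0 := by
      have : Submodule.span ℚ (Set.range f) ≤ LinearMap.ker S := by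
        rw [Submodule.span_le]
        rintro _ ⟨n, rfl⟩
        exact hSf n
      exact this hx1
    have hMx : M x = 0 := by
      have : Submodule.span ℚ (Set.range f) ≤ LinearMap.ker M := by
        rw [Submodule.span_le]
        rintro _ ⟨n, rfl⟩
        exact hMf n
      exact this hx1
    obtain ⟨a, b, rfl⟩ := Submodule.mem_span_pair.mp hx2
    simp only [hS, hM, map_add, map_smul, Module.Basis.constr_basis, smul_eq_mul] at hSx hMx
    norm_num at hSx hMx
    have ha : a = 0 := by linarith
    rw [ha, hMx]
    simp
  · -- codisjoint: every e n lies in the sup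
    rw [codisjoint_iff, eq_top_iff, ← e.span_eq, Submodule.span_le]
    rintro _ ⟨n, rfl⟩
    set K := Submodule.span ℚ (Set.range f) ⊔ Submodule.span ℚ {e 0, e 1} with hK
    show e n ∈ K
    have hfK : ∀ m : ℤ, f m ∈ K :=
      fun m => Submodule.mem_sup_left (Submodule.subset_span ⟨m, rfl⟩)
    have he0 : e 0 ∈ K := Submodule.mem_sup_right (Submodule.subset_span (by simp))
    have he1 : e 1 ∈ K := Submodule.mem_sup_right (Submodule.subset_span (by simp))
    have main : ∀ n : ℤ, e n ∈ K ∧ e (n + 1) ∈ K := by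
      intro n
      induction n using Int.induction_on with
      | zero => exact ⟨he0, he1⟩
      | succ k ih =>
        refine ⟨ih.2, ?_⟩
        have heq : e ((k : ℤ) + 1 + 1) = f k - e k + (2 : ℚ) • e (k + 1) := by
          rw [hf k]; abel
        rw [heq]
        exact K.add_mem (K.sub_mem (hfK k) ih.1) (K.smul_mem _ ih.2)
      | pred k ih =>
        refine ⟨?_, by rw [show (-(k:ℤ) - 1 + 1) = -(k:ℤ) by ring]; exact ih.1⟩
        have heq : e (-(k : ℤ) - 1) = f (-(k : ℤ) - 1) + (2 : ℚ) • e (-(k : ℤ)) - e (-(k : ℤ) + 1) := by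
          rw [hf (-(k : ℤ) - 1)]
          have h1 : (-(k : ℤ) - 1 + 1) = -(k : ℤ) := by ring
          have h2 : (-(k : ℤ) - 1 + 2) = -(k : ℤ) + 1 := by ring
          rw [h1, h2]; abel
        rw [heq]
        exact K.sub_mem (K.add_mem (hfK _) (K.smul_mem _ ih.1)) ih.2
    exact (main n).1
end

section
/- Let A be a free abelian group of rank 2 with basis a, b, let V be a ℚ-vector space, and let Y : A × {a, b} → V be a function satisfying, for all h ∈ A, the relation Y(h,a) − 2Y(h+b,a) + Y(h+2b,a) = Y(h,b) − 2Y(h+a,b) + Y(h+2a,b). Then the span of all values Y(h,x) (h ∈ A, x ∈ {a,b}) equals the span of the set consisting of all Y(h,a) for h ∈ A together with all Y(h,b) for those h ∈ A whose a-coordinate is 0 or 1. -/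
/-- `A = ℤ × ℤ` with basis `a = (1,0)`, `b = (0,1)`; `Ya h` stands for `Y(h,a)` and
`Yb h` for `Y(h,b)`.  The `a`-coordinate of `h` is `h.1`. -/
theorem span_Y_reduction (V : Type*) [AddCommGroup V] [Module ℚ V]
    (Ya Yb : ℤ × ℤ → V)
    (hrel : ∀ h : ℤ × ℤ,
      Ya h - (2 : ℚ) • Ya (h + (0, 1)) + Ya (h + (0, 2))
        = Yb h - (2 : ℚ) • Yb (h + (1, 0)) + Yb (h + (2, 0))) :
    Submodule.span ℚ (Set.range Ya ∪ Set.range Yb)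
      = Submodule.span ℚ (Set.range Ya ∪ (Yb '' {h : ℤ × ℤ | h.1 = 0 ∨ h.1 = 1})) := by
  set S := Submodule.span ℚ (Set.range Ya ∪ (Yb '' {h : ℤ × ℤ | h.1 = 0 ∨ h.1 = 1})) with hS
  have hYa : ∀ h : ℤ × ℤ, Ya h ∈ S := fun h =>
    Submodule.subset_span (Or.inl ⟨h, rfl⟩)
  have hYb01 : ∀ h : ℤ × ℤ, (h.1 = 0 ∨ h.1 = 1) → Yb h ∈ S := fun h hh =>
    Submodule.subset_span (Or.inr ⟨h, hh, rfl⟩)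
  have hrel' : ∀ n m : ℤ,
      Ya (n, m) - (2 : ℚ) • Ya (n, m + 1) + Ya (n, m + 2)
        = Yb (n, m) - (2 : ℚ) • Yb (n + 1, m) + Yb (n + 2, m) := by
    intro n m
    have := hrel (n, m)
    simpa [Prod.mk_add_mk] using this
  have key : ∀ n m : ℤ, Yb (n, m) ∈ S ∧ Yb (n + 1, m) ∈ S := by
    intro n m
    induction n using Int.induction_on with
    | zero => exact ⟨hYb01 _ (Or.inl rfl), hYb01 _ (Or.inr (by norm_num))⟩
    | succ n ih =>
      refine ⟨by simpa using ih.2, ?_⟩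
      have e : Yb (n + 2, m) =
          (2 : ℚ) • Yb (n + 1, m) - Yb (n, m)
            + (Ya (n, m) - (2 : ℚ) • Ya (n, m + 1) + Ya (n, m + 2)) := by
        rw [hrel' n m]
        module
      have : ((n : ℤ) + 1) + 1 = n + 2 := by ring
      rw [this, e]
      exact add_mem (sub_mem (Submodule.smul_mem _ _ ih.2) ih.1)
        (add_mem (sub_mem (hYa _) (Submodule.smul_mem _ _ (hYa _))) (hYa _))
    | pred n ih =>
      have e : Yb (-(n : ℤ) - 1, m) =
          (2 : ℚ) • Yb (-(n : ℤ), m) - Yb (-(n : ℤ) + 1, m)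
            + (Ya (-(n : ℤ) - 1, m) - (2 : ℚ) • Ya (-(n : ℤ) - 1, m + 1)
              + Ya (-(n : ℤ) - 1, m + 2)) := by
        have := hrel' (-(n : ℤ) - 1) m
        have h1 : (-(n : ℤ) - 1) + 1 = -(n : ℤ) := by ring
        have h2 : (-(n : ℤ) - 1) + 2 = -(n : ℤ) + 1 := by ring
        rw [h1, h2] at this
        rw [this]
        module
      constructor
      · rw [e]
        exact add_mem (sub_mem (Submodule.smul_mem _ _ ih.1)
            (by simpa using ih.2))
          (add_mem (sub_mem (hYa _) (Submodule.smul_mem _ _ (hYa _))) (hYa _))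
      · rw [show (-(n : ℤ) - 1 + 1) = -(n : ℤ) by ring]
        exact ih.1
  apply le_antisymm
  · rw [Submodule.span_le]
    rintro v (⟨h, rfl⟩ | ⟨h, rfl⟩)
    · exact hYa h
    · exact (key h.1 h.2).1
  · exact Submodule.span_mono (Set.union_subset_union_right _
      (Set.image_subset_range _ _))
end
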